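/- Let ρ be an n×n complex positive semidefinite matrix with trace 1, and let O be an n×n complex matrix satisfying O·Oᴴ ≤ 𝟙 (i.e. 𝟙 − O·Oᴴ is positive semidefinite). If Tr(O·ρ) = 1, then O·ρ = ρ. -/

import Mathlib

open Matrix
open scoped ComplexOrder

variable {n : ℕ}

noncomputable def toE (v : Fin n → ℂ) : EuclideanSpace ℂ (Fin n) := WithLp.toLp 2 v

lemma dot_eq_inner (v w : Fin n → ℂ) : star v ⬝ᵥ w = (inner ℂ (toE v) (toE w) : ℂ) := by
  simp [dotProduct, PiLp.inner_apply, RCLike.inner_apply, toE, mul_comm]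

lemma dot_self_eq (v : Fin n → ℂ) : star v ⬝ᵥ v = ((‖toE v‖ : ℂ))^2 := by
  rw [dot_eq_inner, inner_self_eq_norm_sq_to_K]; norm_cast

/-- contraction transfer -/
lemma aux_contr (O : Matrix (Fin n) (Fin n) ℂ) (hO : (1 - O * Oᴴ).PosSemidef) :
    (1 - Oᴴ * O).PosSemidef := by
  refine PosSemidef.of_dotProduct_mulVec_nonneg ?_ ?_
  · exact isHermitian_one.sub (isHermitian_conjTranspose_mul_self O)
  · intro x
    set y : Fin n → ℂ := O *ᵥ x with hy
    set z : Fin n → ℂ := Oᴴ *ᵥ y with hz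
    have hsz : star z = star y ᵥ* O := by
      rw [hz, star_mulVec, conjTranspose_conjTranspose]
    have hyy : star y ⬝ᵥ y = star z ⬝ᵥ x := by
      rw [hsz, hy, dotProduct_mulVec]
    -- from hO at y : star z ⬝ᵥ z ≤ star y ⬝ᵥ y
    have h1 : star z ⬝ᵥ z ≤ star y ⬝ᵥ y := by
      have := hO.dotProduct_mulVec_nonneg y
      rw [sub_mulVec, dotProduct_sub, one_mulVec, sub_nonneg, ← mulVec_mulVec, ← hz,
        dotProduct_mulVec, ← hsz] at this
      exact this
    have hzle : ‖toE z‖ ≤ ‖toE y‖ := by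
      rw [dot_self_eq, dot_self_eq] at h1
      have : (‖toE z‖:ℝ)^2 ≤ (‖toE y‖:ℝ)^2 := by exact_mod_cast h1
      nlinarith [norm_nonneg (toE z), norm_nonneg (toE y)]
    have hy2 : ‖toE y‖^2 ≤ ‖toE z‖ * ‖toE x‖ := by
      have : (‖toE y‖:ℝ)^2 = ‖(inner ℂ (toE z) (toE x) : ℂ)‖ := by
        rw [← dot_eq_inner, ← hyy, dot_self_eq]
        simp
      rw [this]
      exact norm_inner_le_norm _ _
    have hyx : ‖toE y‖ ≤ ‖toE x‖ := by
      nlinarith [norm_nonneg (toE z), norm_nonneg (toE y), norm_nonneg (toE x)]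
    have h2 : star y ⬝ᵥ y ≤ star x ⬝ᵥ x := by
      rw [dot_self_eq, dot_self_eq]
      have : (‖toE y‖:ℝ)^2 ≤ (‖toE x‖:ℝ)^2 := by nlinarith [norm_nonneg (toE y)]
      exact_mod_cast this
    have : star x ⬝ᵥ ((1 - Oᴴ * O) *ᵥ x) = star x ⬝ᵥ x - star y ⬝ᵥ y := by
      rw [sub_mulVec, dotProduct_sub, one_mulVec, ← mulVec_mulVec, ← hy]
      congr 1
      rw [dotProduct_mulVec, ← star_mulVec, ← hy]
    rw [this, sub_nonneg]
    exact h2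

lemma trace_nonneg_of_psd {M : Matrix (Fin n) (Fin n) ℂ} (hM : M.PosSemidef) :
    0 ≤ M.trace := by
  have h : ∀ i, 0 ≤ M i i := fun i => by simpa [dotProduct, Pi.single_apply] using hM.dotProduct_mulVec_nonneg (Pi.single i 1)
  exact Finset.sum_nonneg fun i _ => h i

open scoped MatrixOrder in
lemma exists_eq_conjTranspose_mul_self_aux {B : Matrix (Fin n) (Fin n) ℂ} (hB : B.PosSemidef) :
    ∃ C : Matrix (Fin n) (Fin n) ℂ, B = Cᴴ * C :=
  CStarAlgebra.nonneg_iff_eq_star_mul_self.mp hB.nonneg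

lemma trace_mul_nonneg {A B : Matrix (Fin n) (Fin n) ℂ}
    (hA : A.PosSemidef) (hB : B.PosSemidef) : 0 ≤ (A * B).trace := by
  obtain ⟨C, rfl⟩ := exists_eq_conjTranspose_mul_self_aux hB
  have : (A * (Cᴴ * C)).trace = (C * A * Cᴴ).trace := by
    rw [← mul_assoc]; exact Matrix.trace_mul_cycle A Cᴴ C
  rw [this]
  exact trace_nonneg_of_psd (hA.mul_mul_conjTranspose_same C)

lemma eq_zero_of_trace_conj_mul {M : Matrix (Fin n) (Fin n) ℂ}
    (h : (Mᴴ * M).trace = 0) : M = 0 := by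
  have key : ∀ j ∈ Finset.univ, (0:ℂ) ≤ (Mᴴ * M) j j := fun j _ => by
    simp only [mul_apply, conjTranspose_apply]
    exact Finset.sum_nonneg fun i _ => star_mul_self_nonneg _
  have hd := (Finset.sum_eq_zero_iff_of_nonneg key).mp h
  ext i j
  have := hd j (Finset.mem_univ j)
  simp only [mul_apply, conjTranspose_apply] at this
  have hterm := (Finset.sum_eq_zero_iff_of_nonneg
    (fun i _ => star_mul_self_nonneg (M i j))).mp this i (Finset.mem_univ i)
  have : M i j = 0 := by
    by_contra hne
    exact hne (by simpa using (mul_eq_zero.mp hterm).resolve_left (star_ne_zero.mpr hne ∘ id))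
  simpa using this

open scoped MatrixOrder in
lemma exists_sqrt_aux {ρ : Matrix (Fin n) (Fin n) ℂ} (hρ : ρ.PosSemidef) :
    ∃ s : Matrix (Fin n) (Fin n) ℂ, s * s = ρ ∧ sᴴ = s :=
  ⟨CFC.sqrt ρ, CFC.sqrt_mul_sqrt_self ρ hρ.nonneg, (CFC.sqrt_nonneg ρ).posSemidef.1⟩

/-- Cauchy–Schwarz saturation: if `ρ` is PSD with trace 1,
`O·Oᴴ ≤ 𝟙`, and `Tr(O·ρ) = 1`, then `O·ρ = ρ`. -/
theorem stmt0 {n : ℕ} (ρ O : Matrix (Fin n) (Fin n) ℂ)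
    (hρ : ρ.PosSemidef) (htr : ρ.trace = 1)
    (hO : (1 - O * Oᴴ).PosSemidef)
    (h : (O * ρ).trace = 1) : O * ρ = ρ := by
  obtain ⟨s, hss, hsH⟩ := exists_sqrt_aux hρ
  set M : Matrix (Fin n) (Fin n) ℂ := (O - 1) * s with hM
  have htrOH : (Oᴴ * ρ).trace = 1 := by
    have : Oᴴ * ρ = (ρ * O)ᴴ := by rw [conjTranspose_mul, hρ.1]
    rw [this, trace_conjTranspose, trace_mul_comm, h]
    simp
  have htrsq : (Oᴴ * O * ρ).trace ≤ 1 := by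
    have h1 := trace_mul_nonneg (aux_contr O hO) hρ
    have : ((1 - Oᴴ * O) * ρ).trace = ρ.trace - (Oᴴ * O * ρ).trace := by
      rw [sub_mul, trace_sub, one_mul]
    rw [this, htr] at h1
    exact sub_nonneg.mp h1
  have expand : (Oᴴ - 1) * (O - 1) * ρ = Oᴴ * O * ρ - Oᴴ * ρ - O * ρ + ρ := by
    noncomm_ring
  have htrM : (Mᴴ * M).trace = ((Oᴴ - 1) * (O - 1) * ρ).trace := by
    rw [hM, conjTranspose_mul, hsH, conjTranspose_sub, conjTranspose_one, trace_mul_comm,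
      show ((O - 1) * s) * (s * (Oᴴ - 1)) = (O - 1) * ρ * (Oᴴ - 1) by
        rw [← hss]; noncomm_ring]
    exact Matrix.trace_mul_cycle (O - 1) ρ (Oᴴ - 1)
  have htrM0 : (Mᴴ * M).trace ≤ 0 := by
    rw [htrM, expand, trace_add, trace_sub, trace_sub, h, htrOH, htr]
    have : (Oᴴ * O * ρ).trace - 1 - 1 + 1 = (Oᴴ * O * ρ).trace - 1 := by ring
    rw [this]
    exact sub_nonpos.mpr htrsq
  have hM0 : M = 0 := eq_zero_of_trace_conj_mul
    (le_antisymm htrM0 (trace_nonneg_of_psd (posSemidef_conjTranspose_mul_self M)))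
  rw [hM, sub_mul, one_mul, sub_eq_zero] at hM0
  rw [← hss, ← mul_assoc, hM0]
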